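/- Let a₁ = (1,0), a₂ = (0,1), a₃ = (−1,0), a₄ = (0,−1) in ℝ², and set ω² = 7/16 + 5/(2√2). Then for each i ∈ {1,2,3,4}: ω²·aᵢ = Σ_{j≠i} (aᵢ − aⱼ)·(‖aᵢ − aⱼ‖^(−3) + 3‖aᵢ − aⱼ‖^(−5)). In other words, the equal-mass square inscribed in the unit circle is a central configuration of the Schwarzschild potential with multiplier ω² = 7/16 + 5/(2√2). -/

import Mathlib

open Finset

/-- The vertices of the square inscribed in the unit circle. -/
noncomputable def a4 : Fin 4 → EuclideanSpace ℝ (Fin 2) :=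
  ![!₂[1, 0], !₂[0, 1], !₂[-1, 0], !₂[0, -1]]

/-- The equal-mass square inscribed in the unit circle is a central configuration of the
Schwarzschild potential with multiplier `ω² = 7/16 + 5/(2√2)`. -/
theorem square_central_config_schwarzschild :
    ∀ i : Fin 4,
      (7/16 + 5 / (2 * Real.sqrt 2)) • a4 i =
        ∑ j ∈ Finset.univ \ {i},
          (‖a4 i - a4 j‖ ^ (-3 : ℤ) + 3 * ‖a4 i - a4 j‖ ^ (-5 : ℤ)) • (a4 i - a4 j) := by
  have h2 : Real.sqrt 2 ^ 2 = 2 := Real.sq_sqrt (by norm_num)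
  have h2' : Real.sqrt 2 ≠ 0 := by positivity
  have h3 : Real.sqrt 2 ^ 3 = 2 * Real.sqrt 2 := by
    linear_combination Real.sqrt 2 * h2
  have h5 : Real.sqrt 2 ^ 5 = 4 * Real.sqrt 2 := by
    linear_combination (Real.sqrt 2 ^ 3 + 2 * Real.sqrt 2) * h2
  have h3z : Real.sqrt 2 ^ (3:ℤ) = 2 * Real.sqrt 2 := by
    rw [show ((3:ℤ)) = ((3:ℕ):ℤ) by norm_num, zpow_natCast]; exact h3
  have h5z : Real.sqrt 2 ^ (5:ℤ) = 4 * Real.sqrt 2 := by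
    rw [show ((5:ℤ)) = ((5:ℕ):ℤ) by norm_num, zpow_natCast]; exact h5
  have hs4 : Real.sqrt 4 = 2 := by
    rw [show (4:ℝ) = 2^2 by norm_num]; exact Real.sqrt_sq (by norm_num)
  intro i
  fin_cases i <;>
  · rw [Finset.sum_sdiff_eq_sub (Finset.subset_univ _), Fin.sum_univ_four]
    refine PiLp.ext fun k => ?_
    fin_cases k <;>
    · simp only [a4, Matrix.cons_val_zero, Matrix.cons_val_one, Matrix.head_cons,
        Matrix.cons_val_two, Matrix.cons_val_three, Matrix.tail_cons, Finset.sum_singleton]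
      simp [EuclideanSpace.norm_eq, Fin.sum_univ_two, sub_eq_add_neg]
      all_goals norm_num [hs4, h3, h5]
      all_goals field_simp
      all_goals ring
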